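/- Let F(x) = x^d on 𝔽_{2^{2k}} with 0 < d < 2^{2k} − 1. If the set 𝒮_F of α for which Tr^{2k}_1(α x^d) is not bent satisfies |𝒮_F| = 2^k, then 2^k + 1 divides d. -/

import Mathlib

noncomputable instance (n : ℕ) : Fintype (GaloisField 2 n) := Fintype.ofFinite _

/-- The Walsh–Hadamard transform of `f : 𝔽_{2^n} → 𝔽_2` at `l`. -/
noncomputable def walsh (n : ℕ) (f : GaloisField 2 n → ZMod 2) (l : GaloisField 2 n) : ℤ :=
  ∑ x : GaloisField 2 n,
    (-1 : ℤ) ^ ((f x + Algebra.trace (ZMod 2) (GaloisField 2 n) (l * x)).val)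

/-- `f` is bent on `𝔽_{2^{2k}}`: the Walsh transform takes only the values `±2^k`. -/
def IsBent (k : ℕ) (f : GaloisField 2 (2 * k) → ZMod 2) : Prop :=
  ∀ l : GaloisField 2 (2 * k), walsh (2 * k) f l = 2 ^ k ∨ walsh (2 * k) f l = -(2 ^ k)

/-- If a set in a finite commutative group is invariant under (right) multiplication by a
subgroup `H`, then it is a union of cosets of `H`, so `|H|` divides its cardinality. -/
lemma card_dvd_of_invariant {G : Type*} [CommGroup G] [Finite G] (H : Subgroup G) (T : Set G)
    (hT : ∀ t ∈ T, ∀ h ∈ H, t * h ∈ T) : Nat.card H ∣ T.ncard := by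
  classical
  haveI : Fintype G := Fintype.ofFinite _
  have hTfin : T.Finite := Set.toFinite T
  set Tf : Finset G := hTfin.toFinset with hTf
  set π : G → G ⧸ H := QuotientGroup.mk with hπ
  have hmem : ∀ x ∈ Tf, π x ∈ Tf.image π := fun x hx => Finset.mem_image_of_mem π hx
  have hcard := Finset.card_eq_sum_card_fiberwise hmem
  have hfib : ∀ q ∈ Tf.image π, (Tf.filter (fun u => π u = q)).card = Nat.card H := by
    intro q hq
    obtain ⟨t, ht, rfl⟩ := Finset.mem_image.mp hq
    have heq : Tf.filter (fun u => π u = π t) = Finset.univ.image (fun h : H => t * (h : G)) := by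
      ext u
      simp only [Finset.mem_filter, Finset.mem_image, Finset.mem_univ, true_and]
      constructor
      · rintro ⟨hu, hq⟩
        refine ⟨⟨t⁻¹ * u, QuotientGroup.eq.mp hq.symm⟩, ?_⟩
        simp
      · rintro ⟨h, rfl⟩
        refine ⟨?_, ?_⟩
        · simp only [hTf, Set.Finite.mem_toFinset] at ht ⊢
          exact hT t ht h h.2
        · have h1 : (QuotientGroup.mk (h : G) : G ⧸ H) = 1 :=
            (QuotientGroup.eq_one_iff _).mpr h.2
          show QuotientGroup.mk _ = QuotientGroup.mk _
          rw [QuotientGroup.mk_mul, h1, mul_one]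
    rw [heq, Finset.card_image_of_injective _ (fun a b hab => Subtype.ext (by
      exact mul_left_cancel hab)), Finset.card_univ, Nat.card_eq_fintype_card]
  rw [Set.ncard_eq_toFinset_card T hTfin, hcard, Finset.sum_congr rfl hfib]
  simp [Finset.sum_const, mul_comm]

/-- Substituting `x ↦ c x` in a function translates its Walsh transform. -/
lemma walsh_comp_mul (n : ℕ) (f : GaloisField 2 n → ZMod 2) (c : (GaloisField 2 n)ˣ)
    (l : GaloisField 2 n) :
    walsh n (fun x => f ((c : GaloisField 2 n) * x)) l = walsh n f (l * ↑c⁻¹) := by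
  unfold walsh
  refine Fintype.sum_bijective (fun x => (c : GaloisField 2 n) * x)
    (Equiv.mulLeft₀ (c : GaloisField 2 n) (Units.ne_zero c)).bijective _ _ ?_
  intro x
  congr 3
  rw [mul_assoc, Units.inv_mul_cancel_left]

lemma isBent_of_comp {k : ℕ} (f : GaloisField 2 (2 * k) → ZMod 2) (c : (GaloisField 2 (2 * k))ˣ)
    (h : IsBent k (fun x => f ((c : GaloisField 2 (2 * k)) * x))) : IsBent k f := by
  intro l
  have h2 := h (l * ↑c)
  rw [walsh_comp_mul] at h2
  simpa [Units.mul_inv_cancel_right] using h2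

/-- The zero function is not bent (its Walsh transform at `0` is `2^{2k}`). -/
lemma zero_not_bent {k d : ℕ} (hk : 1 ≤ k) :
    ¬ IsBent k fun x => Algebra.trace (ZMod 2) (GaloisField 2 (2 * k))
      ((0 : GaloisField 2 (2 * k)) * x ^ d) := by
  intro hb
  have h0 := hb 0
  have hw : walsh (2 * k) (fun x => Algebra.trace (ZMod 2) (GaloisField 2 (2 * k))
      ((0 : GaloisField 2 (2 * k)) * x ^ d)) 0 = 2 ^ (2 * k) := by
    unfold walsh
    simp only [zero_mul, map_zero, add_zero, ZMod.val_zero, pow_zero]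
    rw [Finset.sum_const, Finset.card_univ, ← Nat.card_eq_fintype_card,
      GaloisField.card 2 (2 * k) (by omega)]
    norm_num [Nat.cast_pow]
  rw [hw] at h0
  have hlt : (2 : ℤ) ^ k < 2 ^ (2 * k) := by
    exact_mod_cast Nat.pow_lt_pow_right one_lt_two (by omega)
  have hpos : (0 : ℤ) < 2 ^ (2 * k) := by positivity
  have hkpos : (0 : ℤ) < 2 ^ k := by positivity
  rcases h0 with h | h <;> omega

/-- If `Tr(α x^d)` is not bent, neither is `Tr(α c^d x^d)`. -/
lemma mem_S_mul {k d : ℕ} (α : GaloisField 2 (2 * k)) (c : (GaloisField 2 (2 * k))ˣ)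
    (hα : ¬ IsBent k fun x => Algebra.trace (ZMod 2) (GaloisField 2 (2 * k)) (α * x ^ d)) :
    ¬ IsBent k fun x => Algebra.trace (ZMod 2) (GaloisField 2 (2 * k))
      ((α * (c : GaloisField 2 (2 * k)) ^ d) * x ^ d) := by
  intro hb
  apply hα
  have hfun : (fun x => Algebra.trace (ZMod 2) (GaloisField 2 (2 * k))
      ((α * (c : GaloisField 2 (2 * k)) ^ d) * x ^ d))
      = fun x => (fun y => Algebra.trace (ZMod 2) (GaloisField 2 (2 * k)) (α * y ^ d))
          ((c : GaloisField 2 (2 * k)) * x) := by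
    funext x
    rw [show α * (c : GaloisField 2 (2 * k)) ^ d * x ^ d
        = α * ((c : GaloisField 2 (2 * k)) * x) ^ d by rw [mul_pow, mul_assoc]]
  rw [hfun] at hb
  exact isBent_of_comp _ c hb

theorem stmt_11 (k d : ℕ) (hd1 : 0 < d) (hd2 : d < 2 ^ (2 * k) - 1)
    (hS : {α : GaloisField 2 (2 * k) |
        ¬ IsBent k fun x => Algebra.trace (ZMod 2) (GaloisField 2 (2 * k)) (α * x ^ d)}.ncard
      = 2 ^ k) :
    (2 ^ k + 1) ∣ d := by
  classical
  have hk : 1 ≤ k := by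
    rcases Nat.eq_zero_or_pos k with h | h
    · subst h; simp at hd2
    · exact h
  set S : Set (GaloisField 2 (2 * k)) := {α | ¬ IsBent k fun x =>
    Algebra.trace (ZMod 2) (GaloisField 2 (2 * k)) (α * x ^ d)} with hSdef
  -- 0 ∈ S
  have h0 : (0 : GaloisField 2 (2 * k)) ∈ S := zero_not_bent hk
  -- the set of units in S
  set T : Set (GaloisField 2 (2 * k))ˣ := {u | (u : GaloisField 2 (2 * k)) ∈ S} with hTdef
  have himg : (fun u : (GaloisField 2 (2 * k))ˣ => (u : GaloisField 2 (2 * k))) '' T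
      = S \ {0} := by
    ext x
    constructor
    · rintro ⟨u, hu, rfl⟩
      exact ⟨hu, Units.ne_zero u⟩
    · rintro ⟨hx, hx0⟩
      exact ⟨Units.mk0 x (by simpa using hx0), hx, by simp⟩
  have hTcard : T.ncard = 2 ^ k - 1 := by
    have := Set.ncard_image_of_injective T (Units.val_injective : Function.Injective
      (fun u : (GaloisField 2 (2 * k))ˣ => (u : GaloisField 2 (2 * k))))
    rw [himg, Set.ncard_diff_singleton_of_mem h0, hS] at this
    omega
  -- generator of the unit group
  obtain ⟨ζ, hζ⟩ := IsCyclic.exists_generator (α := (GaloisField 2 (2 * k))ˣ)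
  set H := Subgroup.zpowers (ζ ^ d) with hH
  -- T is invariant under multiplication by H
  have hTinv : ∀ t ∈ T, ∀ h ∈ H, t * h ∈ T := by
    intro t ht h hh
    obtain ⟨m, hm⟩ := Subgroup.mem_zpowers_iff.mp hh
    have hcd : (ζ ^ m) ^ d = h := by
      rw [← hm, ← zpow_natCast (ζ ^ m) d, ← zpow_mul, ← zpow_natCast ζ d, ← zpow_mul]
      congr 1
      ring
    set c := ζ ^ m with hc
    have hval : ((t * h : (GaloisField 2 (2 * k))ˣ) : GaloisField 2 (2 * k))
        = (t : GaloisField 2 (2 * k)) * (c : GaloisField 2 (2 * k)) ^ d := by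
      rw [← hcd]; push_cast; ring
    show ((t * h : (GaloisField 2 (2 * k))ˣ) : GaloisField 2 (2 * k)) ∈ S
    rw [hval]
    exact mem_S_mul _ c ht
  have hdvd : Nat.card H ∣ T.ncard := card_dvd_of_invariant H T hTinv
  -- compute |H|
  have hcardU : Nat.card (GaloisField 2 (2 * k))ˣ = 2 ^ (2 * k) - 1 := by
    rw [Nat.card_units, GaloisField.card 2 (2 * k) (by omega)]
  have hNH : Nat.card H = (2 ^ (2 * k) - 1) / (2 ^ (2 * k) - 1).gcd d := by
    rw [hH, Nat.card_zpowers, orderOf_pow, orderOf_eq_card_of_forall_mem_zpowers hζ, hcardU]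
  -- arithmetic
  set M := 2 ^ (2 * k) - 1 with hM
  set g := M.gcd d with hg
  have hgM : g ∣ M := Nat.gcd_dvd_left _ _
  have hgd : g ∣ d := Nat.gcd_dvd_right _ _
  have hMfact : M = (2 ^ k + 1) * (2 ^ k - 1) := by
    have h1 : 2 ^ (2 * k) = (2 ^ k) ^ 2 := by rw [mul_comm, pow_mul]
    have h2 := Nat.sq_sub_sq (2 ^ k) 1
    simp only [one_pow] at h2
    omega
  have hdvd2 : M / g ∣ 2 ^ k - 1 := by
    rw [hNH, hTcard] at hdvd
    exact hdvd
  have hMdvd : M ∣ g * (2 ^ k - 1) := by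
    calc M = g * (M / g) := (Nat.mul_div_cancel' hgM).symm
    _ ∣ g * (2 ^ k - 1) := mul_dvd_mul_left g hdvd2
  have hdvd3 : (2 ^ k + 1) ∣ g * (2 ^ k - 1) := dvd_trans ⟨2 ^ k - 1, hMfact⟩ hMdvd
  have hk2 : 2 ≤ 2 ^ k := by
    calc 2 = 2 ^ 1 := rfl
    _ ≤ 2 ^ k := Nat.pow_le_pow_right (by norm_num) hk
  have hcop : Nat.Coprime (2 ^ k + 1) (2 ^ k - 1) := by
    obtain ⟨e, he⟩ : 2 ∣ 2 ^ k := dvd_pow_self 2 (by omega)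
    have hsub := Nat.dvd_sub (Nat.gcd_dvd_left (2 ^ k + 1) (2 ^ k - 1))
      (Nat.gcd_dvd_right (2 ^ k + 1) (2 ^ k - 1))
    rw [show (2 ^ k + 1) - (2 ^ k - 1) = 2 by omega] at hsub
    rcases (Nat.dvd_prime Nat.prime_two).mp hsub with h | h
    · exact h
    · exfalso
      have hdl := Nat.gcd_dvd_left (2 ^ k + 1) (2 ^ k - 1)
      rw [h] at hdl
      omega
  exact dvd_trans (hcop.dvd_of_dvd_mul_right hdvd3) hgd
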